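/- (Uniqueness in Theorem 3.3) Assume C(k,p) ≥ r and C(n−k−1, m−p−1) ≥ r, the scalars λ_1, …, λ_r are all nonzero, the vectors [u_1]_{B_0}, …, [u_r]_{B_0} are linearly independent, for every α ∈ B_1 the vectors [u_1]_{O_α}, …, [u_r]_{O_α} are linearly independent, and there exists ξ = (ξ_{k+1}, …, ξ_n) ∈ ℂ^{n−k} such that the r numbers Σ_{l=k+1}^n ξ_l (u_i)_l, i = 1, …, r, are pairwise distinct. If λ'_1, …, λ'_r ∈ ℂ and u'_1, …, u'_r ∈ ℂ^n satisfy Σ_{i=1}^r λ'_i (u'_i)^α = Σ_{i=1}^r λ_i u_i^α for every multi-index α ∈ {0,1}^n with m−1 ≤ |α| ≤ m, then there is a permutation σ of {1,…,r} with λ'_i = λ_{σ(i)} and u'_i = u_{σ(i)} for all i. -/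

import Mathlib

/-- `β` is a squarefree multi-index (monomial `x^β`) of degree `p` supported in the first
`k` variables. -/
def IsB0Monomial (n k p : ℕ) (β : Fin n → ℕ) : Prop :=
  (∀ j, β j ≤ 1) ∧ (∑ j, β j = p) ∧ (∀ j, β j ≠ 0 → (j : ℕ) < k)

/-- `α ∈ B₁`: `α` is a squarefree multi-index of degree `p+1` with exactly one support
index among the last `n - k` variables. -/
def MemB1 (n k p : ℕ) (α : Fin n → ℕ) : Prop :=
  (∀ j, α j ≤ 1) ∧ (∑ j, α j = p + 1) ∧
    (∑ j ∈ Finset.univ.filter (fun j : Fin n => k ≤ (j : ℕ)), α j = 1)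

/-- `γ ∈ O_α`. -/
def MemOalpha (n m p k : ℕ) (α γ : Fin n → ℕ) : Prop :=
  (∀ j, γ j ≤ 1) ∧ (∑ j, γ j = m - p - 1) ∧ (∀ j, γ j ≠ 0 → k ≤ (j : ℕ) ∧ α j = 0)

/-- uniqueness in Theorem 3.3: assume `C(k,p) ≥ r`,
`C(n-k-1, m-p-1) ≥ r`, the scalars `λ i` are nonzero, the vectors `[u i]_{B₀}` are
linearly independent, for every `α ∈ B₁` the vectors `[u i]_{O_α}` are linearly
independent, and there is `ξ ∈ ℂ^{n-k}` (entries `ξ_{k+1}, …, ξ_n`) such that the `r`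
numbers `∑_{l=k+1}^n ξ_l (u i)_l` are pairwise distinct.  If `λ'`, `u'` satisfy
`∑ i, λ' i (u' i)^α = ∑ i, λ i (u i)^α` for every 0/1-multi-index `α` with
`m - 1 ≤ |α| ≤ m`, then the decompositions agree up to a permutation. -/



def mon {n : ℕ} (x : Fin n → ℂ) (β : Fin n → ℕ) : ℂ := ∏ j, x j ^ β j

lemma mon_add {n : ℕ} (x : Fin n → ℂ) (β γ : Fin n → ℕ) :
    mon x (fun j => β j + γ j) = mon x β * mon x γ := by
  simp [mon, pow_add, Finset.prod_mul_distrib]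

def esing {n : ℕ} (l : Fin n) : Fin n → ℕ := fun j => if j = l then 1 else 0

lemma esing_sum {n : ℕ} (l : Fin n) : ∑ j, esing l j = 1 := by
  simp [esing, Finset.sum_ite_eq']

lemma mon_esing {n : ℕ} (x : Fin n → ℂ) (l : Fin n) (β : Fin n → ℕ) :
    mon x (fun j => β j + esing l j) = mon x β * x l := by
  rw [mon_add]
  congr 1
  calc mon x (esing l) = ∏ j, (if j = l then x j else 1) :=
        Finset.prod_congr rfl (fun j _ => by by_cases h : j = l <;> simp [esing, h])
    _ = x l := by simp [Finset.prod_ite_eq']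

def alpha0 (n p : ℕ) (l : Fin n) : Fin n → ℕ :=
  fun j => (if (j : ℕ) < p then 1 else 0) + (if j = l then 1 else 0)

lemma sum_indic_lt (n p : ℕ) (hpn : p ≤ n) :
    ∑ j : Fin n, (if (j : ℕ) < p then (1:ℕ) else 0) = p := by
  rw [Fin.sum_univ_eq_sum_range (fun i => if i < p then (1:ℕ) else 0) n]
  rw [← Finset.sum_subset (Finset.range_subset_range.2 hpn)
    (fun x _ hx' => if_neg (by simpa using hx'))]
  rw [Finset.sum_congr rfl (fun x hx => if_pos (Finset.mem_range.1 hx))]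
  simp

lemma alpha0_memB1 {n k p : ℕ} (hp1 : 1 ≤ p) (hpk : p ≤ k) (l : Fin n) (hl : k ≤ (l : ℕ)) :
    MemB1 n k p (alpha0 n p l) := by
  have hpn : p ≤ n := le_trans (hpk.trans hl) (le_of_lt l.isLt)
  refine ⟨?_, ?_, ?_⟩
  · intro j
    by_cases h2 : j = l
    · subst h2
      have h1 : ¬ ((j : ℕ) < p) := by omega
      simp [alpha0, h1]
    · by_cases h1 : (j : ℕ) < p <;> simp [alpha0, h1, h2]
  · simp only [alpha0]
    rw [Finset.sum_add_distrib, sum_indic_lt n p hpn]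
    simp [Finset.sum_ite_eq']
  · rw [Finset.sum_congr rfl (fun j hj => show alpha0 n p l j = if j = l then 1 else 0 by
      have hjk : k ≤ (j : ℕ) := (Finset.mem_filter.1 hj).2
      simp [alpha0, show ¬((j : ℕ) < p) by omega])]
    rw [Finset.sum_ite_eq']
    simp [Finset.mem_filter, hl]

lemma sum_swap_mul {r : ℕ} (f : Fin r → ℂ) (M : Fin r → Fin r → ℂ) (g : Fin r → ℂ) :
    ∑ t, f t * ∑ j, M t j * g j = ∑ j, (∑ t, f t * M t j) * g j := by
  calc ∑ t, f t * ∑ j, M t j * g j = ∑ t, ∑ j, f t * M t j * g j := by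
        refine Finset.sum_congr rfl fun t _ => ?_
        rw [Finset.mul_sum]
        exact Finset.sum_congr rfl fun j _ => by ring
    _ = ∑ j, ∑ t, f t * M t j * g j := Finset.sum_comm
    _ = ∑ j, (∑ t, f t * M t j) * g j := by
        refine Finset.sum_congr rfl fun j _ => ?_
        rw [Finset.sum_mul]

theorem decomposition_unique_up_to_permutation
    (n m r p k : ℕ) (hn : 0 < n) (hm : 3 ≤ m) (hr : 0 < r)
    (hp1 : 1 ≤ p) (hp2 : p ≤ m - 2) (hk1 : p ≤ k) (hk2 : k ≤ n - m + p)
    (hbin0 : r ≤ Nat.choose k p) (hbin1 : r ≤ Nat.choose (n - k - 1) (m - p - 1))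
    (lam : Fin r → ℂ) (hlam : ∀ i, lam i ≠ 0)
    (u : Fin r → Fin n → ℂ)
    (B0 : Finset (Fin n → ℕ))
    (hB0 : ∀ β ∈ B0, IsB0Monomial n k p β)
    (hB0card : B0.card = r)
    (hB0first : ∀ β ∈ B0, ∀ γ : Fin n → ℕ, IsB0Monomial n k p γ →
      toLex β ≤ toLex γ → γ ∈ B0)
    (huB0 : LinearIndependent ℂ
      (fun i : Fin r => fun β : {β : Fin n → ℕ // β ∈ B0} => ∏ j, u i j ^ β.1 j))
    (huOα : ∀ α : Fin n → ℕ, MemB1 n k p α → LinearIndependent ℂ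
      (fun i : Fin r => fun γ : {γ : Fin n → ℕ // MemOalpha n m p k α γ} =>
        ∏ j, u i j ^ γ.1 j))
    (ξ : Fin n → ℂ)
    (hξ : ∀ i1 i2 : Fin r,
      (∑ l ∈ Finset.univ.filter (fun l : Fin n => k ≤ (l : ℕ)), ξ l * u i1 l) =
      (∑ l ∈ Finset.univ.filter (fun l : Fin n => k ≤ (l : ℕ)), ξ l * u i2 l) → i1 = i2)
    (lam' : Fin r → ℂ) (u' : Fin r → Fin n → ℂ)
    (hmatch : ∀ α : Fin n → ℕ, (∀ j, α j ≤ 1) →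
      m - 1 ≤ ∑ j, α j → (∑ j, α j) ≤ m →
      ∑ i, lam' i * ∏ j, u' i j ^ α j = ∑ i, lam i * ∏ j, u i j ^ α j) :
    ∃ σ : Equiv.Perm (Fin r), ∀ i : Fin r, lam' i = lam (σ i) ∧ u' i = u (σ i) := by
  classical
  have hmp2 : p + 2 ≤ m := by omega
  have hmpnk : m - p - 1 ≤ n - k - 1 := by
    by_contra h
    push_neg at h
    rw [Nat.choose_eq_zero_of_lt h] at hbin1
    omega
  have hkn : k + 2 ≤ n := by omega
  have hmO : ∀ l : Fin n, k ≤ (l : ℕ) → ∀ γ : Fin n → ℕ, MemOalpha n m p k (alpha0 n p l) γ →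
      (∀ s, γ s ≤ 1) ∧ (∑ s, γ s = m - p - 1) ∧ (∀ s, γ s ≠ 0 → k ≤ (s : ℕ) ∧ s ≠ l) ∧ γ l = 0 := by
    intro l hl γ hγ
    obtain ⟨h1, h2, h3⟩ := hγ
    have hne : ∀ s, γ s ≠ 0 → k ≤ (s : ℕ) ∧ s ≠ l := by
      intro s hs
      obtain ⟨ha, hb⟩ := h3 s hs
      refine ⟨ha, ?_⟩
      rintro rfl
      have hne0 : alpha0 n p s s ≠ 0 := by simp [alpha0]
      exact hne0 hb
    refine ⟨h1, h2, hne, ?_⟩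
    by_contra h
    exact (hne l h).2 rfl
  have hol : ∀ l : Fin n, k ≤ (l : ℕ) → LinearIndependent ℂ
      (fun i : Fin r => fun γ : {γ : Fin n → ℕ // MemOalpha n m p k (alpha0 n p l) γ} =>
        mon (u i) γ.1) := fun l hl => huOα _ (alpha0_memB1 hp1 hk1 l hl)
  haveI : Nonempty (Fin r) := ⟨⟨0, hr⟩⟩
  have hcard : Fintype.card (Fin r) = Module.finrank ℂ ({β : Fin n → ℕ // β ∈ B0} → ℂ) := by
    rw [Module.finrank_fintype_fun_eq_card, Fintype.card_coe, hB0card, Fintype.card_fin]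
  set bV : Module.Basis (Fin r) ℂ ({β : Fin n → ℕ // β ∈ B0} → ℂ) :=
    basisOfLinearIndependentOfCardEqFinrank huB0 hcard with hbVdef
  have hbV : ∀ i, bV i = fun β : {β : Fin n → ℕ // β ∈ B0} => mon (u i) β.1 := by
    intro i
    rw [hbVdef]
    exact congrFun (coe_basisOfLinearIndependentOfCardEqFinrank huB0 hcard) i
  obtain ⟨c, hc⟩ : ∃ c : Fin r → Fin r → ℂ, ∀ t j,
      c t j = bV.repr (fun β : {β : Fin n → ℕ // β ∈ B0} => mon (u' j) β.1) t :=
    ⟨_, fun _ _ => rfl⟩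
  have hrepr : ∀ (a : Fin r → ℂ) (t : Fin r), bV.repr (∑ i, a i • bV i) t = a t := by
    intro a t
    rw [map_sum, Finset.sum_apply']
    have h1 : ∀ i : Fin r, (bV.repr (a i • bV i)) t = if i = t then a i else 0 := by
      intro i
      rw [map_smul, Module.Basis.repr_self, Finsupp.smul_apply, Finsupp.single_apply]
      by_cases h : i = t <;> simp [h]
    rw [Finset.sum_congr rfl fun i _ => h1 i, Finset.sum_ite_eq']
    simp
  have hstar : ∀ γ : Fin n → ℕ, (∀ s, γ s ≤ 1) → (∀ s, γ s ≠ 0 → k ≤ (s : ℕ)) →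
      (∑ s, γ s = m - p - 1 ∨ ∑ s, γ s = m - p) →
      ∀ t, lam t * mon (u t) γ = ∑ j, c t j * (lam' j * mon (u' j) γ) := by
    intro γ hγ1 hγ2 hγ3 t
    have hfun : (∑ i, (lam i * mon (u i) γ) • bV i)
        = ∑ i, (lam' i * mon (u' i) γ) • (fun β : {β : Fin n → ℕ // β ∈ B0} => mon (u' i) β.1) := by
      funext β
      obtain ⟨hβ1, hβ2, hβ3⟩ := hB0 β.1 β.2
      have hγ0 : ∀ s : Fin n, (s : ℕ) < k → γ s = 0 := by
        intro s hs; by_contra h; have := hγ2 s h; omega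
      have hβ0 : ∀ s : Fin n, k ≤ (s : ℕ) → β.1 s = 0 := by
        intro s hs; by_contra h; have := hβ3 s h; omega
      have hsq : ∀ s, β.1 s + γ s ≤ 1 := by
        intro s
        by_cases hs : (s : ℕ) < k
        · have h1 := hγ0 s hs; have h2 := hβ1 s; omega
        · have h1 := hβ0 s (by omega); have h2 := hγ1 s; omega
      have hdeg : ∑ s, (β.1 s + γ s) = p + ∑ s, γ s := by
        rw [Finset.sum_add_distrib, hβ2]
      have hme := hmatch (fun s => β.1 s + γ s) hsq
        (by rw [show ∑ s, (fun s => β.1 s + γ s) s = ∑ s, (β.1 s + γ s) from rfl, hdeg]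
            rcases hγ3 with h | h <;> omega)
        (by rw [show ∑ s, (fun s => β.1 s + γ s) s = ∑ s, (β.1 s + γ s) from rfl, hdeg]
            rcases hγ3 with h | h <;> omega)
      simp only [Finset.sum_apply, Pi.smul_apply, smul_eq_mul, hbV]
      calc ∑ i, lam i * mon (u i) γ * mon (u i) β.1
          = ∑ i, lam i * mon (u i) (fun s => β.1 s + γ s) := by
            refine Finset.sum_congr rfl fun i _ => ?_
            rw [mon_add]; ring
        _ = ∑ i, lam' i * mon (u' i) (fun s => β.1 s + γ s) := hme.symm
        _ = ∑ i, lam' i * mon (u' i) γ * mon (u' i) β.1 := by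
            refine Finset.sum_congr rfl fun i _ => ?_
            rw [mon_add]; ring
    have h2 := congrArg (fun X => (bV.repr X) t) hfun
    rw [hrepr] at h2
    rw [map_sum, Finset.sum_apply'] at h2
    simp only [map_smul, Finsupp.smul_apply, smul_eq_mul] at h2
    rw [h2]
    refine Finset.sum_congr rfl fun j _ => ?_
    rw [hc]
    ring
  obtain ⟨l0, hl0⟩ : ∃ l0 : Fin n, k ≤ (l0 : ℕ) := ⟨⟨k, by omega⟩, le_rfl⟩
  have hCinv : ∀ x : Fin r → ℂ, (∀ j, ∑ t, x t * c t j = 0) → x = 0 := by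
    intro x hx
    have h0 : ∀ γ : {γ : Fin n → ℕ // MemOalpha n m p k (alpha0 n p l0) γ},
        ∑ t, (x t * lam t) • mon (u t) γ.1 = 0 := by
      intro γ
      obtain ⟨g1, g2, g3, g4⟩ := hmO l0 hl0 γ.1 γ.2
      calc ∑ t, (x t * lam t) • mon (u t) γ.1
          = ∑ t, x t * (lam t * mon (u t) γ.1) := by
            exact Finset.sum_congr rfl fun t _ => by rw [smul_eq_mul]; ring
        _ = ∑ t, x t * ∑ j, c t j * (lam' j * mon (u' j) γ.1) := by
            exact Finset.sum_congr rfl fun t _ => by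
              rw [hstar γ.1 g1 (fun s hs => (g3 s hs).1) (Or.inl g2) t]
        _ = ∑ j, (∑ t, x t * c t j) * (lam' j * mon (u' j) γ.1) := sum_swap_mul _ _ _
        _ = 0 := by simp [hx]
    have hz : ∀ t, x t * lam t = 0 := by
      refine Fintype.linearIndependent_iff.mp (hol l0 hl0) (fun t => x t * lam t) ?_
      funext γ
      simpa [Finset.sum_apply, smul_eq_mul] using h0 γ
    funext t
    show x t = 0
    rcases mul_eq_zero.mp (hz t) with h | h
    · exact h
    · exact absurd h (hlam t)
  obtain ⟨Bm, hBm⟩ : ∃ Bm : Fin r → Fin r → ℂ, ∀ j j',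
      ∑ t, Bm j t * c t j' = if j' = j then 1 else 0 := by
    let L : (Fin r → ℂ) →ₗ[ℂ] (Fin r → ℂ) :=
      { toFun := fun x j => ∑ t, x t * c t j
        map_add' := by
          intro a b
          funext j
          simp only [Pi.add_apply]
          rw [← Finset.sum_add_distrib]
          exact Finset.sum_congr rfl fun t _ => by ring
        map_smul' := by
          intro s x
          funext j
          simp only [smul_eq_mul, Pi.smul_apply, RingHom.id_apply]
          rw [Finset.mul_sum]
          exact Finset.sum_congr rfl fun t _ => by ring }
    have hinj : Function.Injective L := by
      intro a b hab
      have h0 : a - b = 0 := by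
        apply hCinv
        intro j
        have h1 : ∑ t, a t * c t j = ∑ t, b t * c t j := congrFun hab j
        calc ∑ t, (a - b) t * c t j
            = ∑ t, (a t * c t j - b t * c t j) := by
              exact Finset.sum_congr rfl fun t _ => by simp [sub_mul]
          _ = 0 := by rw [Finset.sum_sub_distrib, h1, sub_self]
      exact sub_eq_zero.mp h0
    have hsurj := LinearMap.injective_iff_surjective.mp hinj
    choose Bm hBm using fun j => hsurj (fun j' => if j' = j then 1 else 0)
    exact ⟨Bm, fun j j' => by
      have h2 := congrFun (hBm j) j'
      simpa [L] using h2⟩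
  have hCB : ∀ t t', ∑ j, c t j * Bm j t' = if t = t' then 1 else 0 := by
    have h1 : (Matrix.of Bm) * (Matrix.of c) = 1 := by
      ext j j'
      rw [Matrix.mul_apply]
      simp only [Matrix.of_apply]
      rw [hBm j j', Matrix.one_apply]
      by_cases h : j = j'
      · simp [h]
      · simp [h, Ne.symm h]
    have h2 := mul_eq_one_comm.mp h1
    intro t t'
    have h3 : (Matrix.of c * Matrix.of Bm) t t' = (1 : Matrix (Fin r) (Fin r) ℂ) t t' := by
      rw [h2]
    rw [Matrix.mul_apply, Matrix.one_apply] at h3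
    simpa using h3
  have hmul : ∀ x : Fin r → ℂ, (∀ t, ∑ j, c t j * x j = 0) → x = 0 := by
    intro x hx
    funext j
    show x j = 0
    calc x j = ∑ j', (if j' = j then 1 else 0) * x j' := by
          simp [ite_mul, Finset.sum_ite_eq']
      _ = ∑ j', (∑ t, Bm j t * c t j') * x j' := by
          exact Finset.sum_congr rfl fun j' _ => by rw [hBm j j']
      _ = ∑ t, Bm j t * ∑ j', c t j' * x j' := (sum_swap_mul (Bm j) c x).symm
      _ = 0 := by simp [hx]
  have hG : ∀ (l : Fin n), k ≤ (l : ℕ) →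
      ∀ (γ : {γ : Fin n → ℕ // MemOalpha n m p k (alpha0 n p l) γ}) (j : Fin r),
      lam' j * mon (u' j) γ.1 = ∑ t, Bm j t * (lam t * mon (u t) γ.1) := by
    intro l hl γ j
    obtain ⟨g1, g2, g3, g4⟩ := hmO l hl γ.1 γ.2
    symm
    calc ∑ t, Bm j t * (lam t * mon (u t) γ.1)
        = ∑ t, Bm j t * ∑ j', c t j' * (lam' j' * mon (u' j') γ.1) := by
          exact Finset.sum_congr rfl fun t _ => by
            rw [hstar γ.1 g1 (fun s hs => (g3 s hs).1) (Or.inl g2) t]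
      _ = ∑ j', (∑ t, Bm j t * c t j') * (lam' j' * mon (u' j') γ.1) :=
          sum_swap_mul (Bm j) c _
      _ = ∑ j', (if j' = j then 1 else 0) * (lam' j' * mon (u' j') γ.1) := by
          exact Finset.sum_congr rfl fun j' _ => by rw [hBm j j']
      _ = lam' j * mon (u' j) γ.1 := by
          simp [ite_mul, Finset.sum_ite_eq']
  have g_li : ∀ (l : Fin n), k ≤ (l : ℕ) → ∀ y : Fin r → ℂ,
      (∀ γ : {γ : Fin n → ℕ // MemOalpha n m p k (alpha0 n p l) γ},
        ∑ j, y j * (lam' j * mon (u' j) γ.1) = 0) → ∀ j, y j = 0 := by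
    intro l hl y hy
    have h0 : ∀ γ : {γ : Fin n → ℕ // MemOalpha n m p k (alpha0 n p l) γ},
        ∑ t, ((∑ j, y j * Bm j t) * lam t) • mon (u t) γ.1 = 0 := by
      intro γ
      calc ∑ t, ((∑ j, y j * Bm j t) * lam t) • mon (u t) γ.1
          = ∑ t, (∑ j, y j * Bm j t) * (lam t * mon (u t) γ.1) := by
            exact Finset.sum_congr rfl fun t _ => by rw [smul_eq_mul]; ring
        _ = ∑ j, y j * ∑ t, Bm j t * (lam t * mon (u t) γ.1) :=
            (sum_swap_mul y Bm _).symm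
        _ = ∑ j, y j * (lam' j * mon (u' j) γ.1) := by
            exact Finset.sum_congr rfl fun j _ => by rw [← hG l hl γ j]
        _ = 0 := hy γ
    have hz : ∀ t, (∑ j, y j * Bm j t) * lam t = 0 := by
      refine Fintype.linearIndependent_iff.mp (hol l hl) _ ?_
      funext γ
      simpa [Finset.sum_apply, smul_eq_mul] using h0 γ
    have hyB : ∀ t, ∑ j, y j * Bm j t = 0 := fun t => by
      rcases mul_eq_zero.mp (hz t) with h | h
      · exact h
      · exact absurd h (hlam t)
    intro j
    calc y j = ∑ j', y j' * (if j = j' then 1 else 0) := by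
          simp [mul_ite, Finset.sum_ite_eq]
      _ = ∑ j', y j' * ∑ t, Bm j' t * c t j := by
          exact Finset.sum_congr rfl fun j' _ => by rw [hBm j' j]
      _ = ∑ t, (∑ j', y j' * Bm j' t) * c t j := sum_swap_mul y Bm _
      _ = 0 := by simp [hyB]
  have hkey : ∀ (l : Fin n), k ≤ (l : ℕ) → ∀ t j, c t j ≠ 0 → u' j l = u t l := by
    intro l hl t j hc0
    have h0 : ∀ γ : {γ : Fin n → ℕ // MemOalpha n m p k (alpha0 n p l) γ},
        ∑ j', (c t j' * (u' j' l - u t l)) * (lam' j' * mon (u' j') γ.1) = 0 := by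
      intro γ
      obtain ⟨g1, g2, g3, g4⟩ := hmO l hl γ.1 γ.2
      have e1 := hstar γ.1 g1 (fun s hs => (g3 s hs).1) (Or.inl g2) t
      have hsq : ∀ s, γ.1 s + esing l s ≤ 1 := by
        intro s
        by_cases h : s = l
        · subst h; simp [esing, g4]
        · simpa [esing, h] using g1 s
      have hsupp : ∀ s : Fin n, γ.1 s + esing l s ≠ 0 → k ≤ (s : ℕ) := by
        intro s hs
        by_cases h : s = l
        · subst h; exact hl
        · simp only [esing, if_neg h, add_zero] at hs
          exact (g3 s hs).1
      have hdeg : ∑ s, (γ.1 s + esing l s) = m - p := by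
        rw [Finset.sum_add_distrib, g2, esing_sum]; omega
      have e2 := hstar (fun s => γ.1 s + esing l s) hsq hsupp (Or.inr hdeg) t
      simp only [mon_esing] at e2
      calc ∑ j', (c t j' * (u' j' l - u t l)) * (lam' j' * mon (u' j') γ.1)
          = (∑ j', c t j' * (lam' j' * (mon (u' j') γ.1 * u' j' l)))
            - u t l * ∑ j', c t j' * (lam' j' * mon (u' j') γ.1) := by
            rw [Finset.mul_sum, ← Finset.sum_sub_distrib]
            exact Finset.sum_congr rfl fun j' _ => by ring
        _ = lam t * (mon (u t) γ.1 * u t l) - u t l * (lam t * mon (u t) γ.1) := by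
            rw [← e2, ← e1]
        _ = 0 := by ring
    have hz := g_li l hl _ h0 j
    rcases mul_eq_zero.mp hz with h | h
    · exact absurd h hc0
    · exact sub_eq_zero.mp h
  have hcol : ∀ j, ∃ t, c t j ≠ 0 := by
    intro j
    by_contra hno
    push_neg at hno
    have h1 : (fun j' => if j' = j then (1:ℂ) else 0) = 0 := by
      apply hmul
      intro t
      rw [Finset.sum_congr rfl fun j' (_ : j' ∈ Finset.univ) => by
        rw [mul_ite, mul_one, mul_zero]]
      rw [Finset.sum_ite_eq']
      simp [hno t]
    have h2 := congrFun h1 j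
    simp at h2
  have huniq : ∀ (j t t' : Fin r), c t j ≠ 0 → c t' j ≠ 0 → t = t' := by
    intro j t t' h h'
    apply hξ
    have e1 : ∀ l ∈ Finset.univ.filter (fun l : Fin n => k ≤ (l : ℕ)),
        ξ l * u t l = ξ l * u' j l := by
      intro l hlm
      rw [hkey l (Finset.mem_filter.mp hlm).2 t j h]
    have e2 : ∀ l ∈ Finset.univ.filter (fun l : Fin n => k ≤ (l : ℕ)),
        ξ l * u t' l = ξ l * u' j l := by
      intro l hlm
      rw [hkey l (Finset.mem_filter.mp hlm).2 t' j h']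
    rw [Finset.sum_congr rfl e1, ← Finset.sum_congr rfl e2]
  choose tau htau using hcol
  have htinj : Function.Injective tau := by
    intro j j' hjj
    by_contra hne
    have hx : (fun w => (if w = j then c (tau j) j' else 0)
        + (if w = j' then -(c (tau j) j) else 0)) = 0 := by
      apply hmul
      intro s
      have hsplit : ∑ w, c s w * ((if w = j then c (tau j) j' else 0)
          + (if w = j' then -(c (tau j) j) else 0))
          = c s j * c (tau j) j' + c s j' * -(c (tau j) j) := by
        rw [Finset.sum_congr rfl fun w (_ : w ∈ Finset.univ) => mul_add (c s w) _ _,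
          Finset.sum_add_distrib]
        congr 1
        · rw [Finset.sum_congr rfl fun w (_ : w ∈ Finset.univ) => by
            rw [mul_ite, mul_zero], Finset.sum_ite_eq']
          simp
        · rw [Finset.sum_congr rfl fun w (_ : w ∈ Finset.univ) => by
            rw [mul_ite, mul_zero], Finset.sum_ite_eq']
          simp
      rw [hsplit]
      by_cases hs : s = tau j
      · subst hs; ring
      · have hz1 : c s j = 0 := by
          by_contra hcc; exact hs (huniq j s (tau j) hcc (htau j))
        have hz2 : c s j' = 0 := by
          by_contra hcc; exact hs ((huniq j' s (tau j') hcc (htau j')).trans hjj.symm)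
        rw [hz1, hz2]; ring
    have hz : c (tau j) j' = 0 := by simpa [hne] using congrFun hx j
    rw [hjj] at hz
    exact htau j' hz
  have hbij := Finite.injective_iff_bijective.mp htinj
  have hagree : ∀ (j : Fin r) (l : Fin n), k ≤ (l : ℕ) → u' j l = u (tau j) l :=
    fun j l hl => hkey l hl (tau j) j (htau j)
  have hmona : ∀ (j : Fin r) (γ : Fin n → ℕ), (∀ s, γ s ≠ 0 → k ≤ (s : ℕ)) →
      mon (u' j) γ = mon (u (tau j)) γ := by
    intro j γ hs
    refine Finset.prod_congr rfl fun s _ => ?_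
    by_cases h : γ s = 0
    · simp [h]
    · rw [hagree j s (hs s h)]
  have hW : ∀ (l : Fin n), k ≤ (l : ℕ) → ∀ δ : Fin n → ℕ, (∀ s, δ s ≤ 1) →
      (∀ s, δ s ≠ 0 → ((s : ℕ) < k ∨ s = l)) → (∑ s, δ s = p ∨ ∑ s, δ s = p + 1) →
      ∀ j, lam' j * mon (u' j) δ = lam (tau j) * mon (u (tau j)) δ := by
    intro l hl δ h1 h2 h3 j
    have hli := (hol l hl).comp tau htinj
    have hz : ∀ j', lam' j' * mon (u' j') δ - lam (tau j') * mon (u (tau j')) δ = 0 := by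
      refine Fintype.linearIndependent_iff.mp hli _ ?_
      funext γ
      simp only [Finset.sum_apply, Pi.smul_apply, smul_eq_mul, Function.comp_apply,
        Pi.zero_apply]
      obtain ⟨g1, g2, g3, g4⟩ := hmO l hl γ.1 γ.2
      have hsq : ∀ s, δ s + γ.1 s ≤ 1 := by
        intro s
        by_cases h : γ.1 s = 0
        · have := h1 s; omega
        · have hd : δ s = 0 := by
            by_contra hd
            rcases h2 s hd with hcase | hcase
            · have := (g3 s h).1; omega
            · exact (g3 s h).2 hcase
          have := g1 s; omega
      have hdeg : ∑ s, (δ s + γ.1 s) = ∑ s, δ s + (m - p - 1) := by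
        rw [Finset.sum_add_distrib, g2]
      have hme := hmatch (fun s => δ s + γ.1 s) hsq
        (by rw [show ∑ s, (fun s => δ s + γ.1 s) s = ∑ s, (δ s + γ.1 s) from rfl, hdeg]
            rcases h3 with h | h <;> omega)
        (by rw [show ∑ s, (fun s => δ s + γ.1 s) s = ∑ s, (δ s + γ.1 s) from rfl, hdeg]
            rcases h3 with h | h <;> omega)
      calc ∑ j', (lam' j' * mon (u' j') δ - lam (tau j') * mon (u (tau j')) δ)
            * mon (u (tau j')) γ.1
          = (∑ j', lam' j' * mon (u' j') (fun s => δ s + γ.1 s))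
            - ∑ j', lam (tau j') * mon (u (tau j')) (fun s => δ s + γ.1 s) := by
            rw [← Finset.sum_sub_distrib]
            refine Finset.sum_congr rfl fun j' _ => ?_
            rw [mon_add, mon_add, ← hmona j' γ.1 (fun s hs => (g3 s hs).1)]
            ring
        _ = (∑ i, lam' i * mon (u' i) (fun s => δ s + γ.1 s))
            - ∑ i, lam i * mon (u i) (fun s => δ s + γ.1 s) := by
            congr 1
            exact Equiv.sum_comp (Equiv.ofBijective tau hbij)
              (fun i => lam i * mon (u i) (fun s => δ s + γ.1 s))
        _ = 0 := sub_eq_zero.mpr hme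
    exact sub_eq_zero.mp (hz j)
  refine ⟨Equiv.ofBijective tau hbij, fun j => ?_⟩
  show lam' j = lam (tau j) ∧ u' j = u (tau j)
  obtain ⟨β, hβne⟩ : ∃ β : {β : Fin n → ℕ // β ∈ B0}, mon (u (tau j)) β.1 ≠ 0 := by
    by_contra hno
    push_neg at hno
    exact LinearIndependent.ne_zero (tau j) huB0 (funext fun β => hno β)
  obtain ⟨hβ1, hβ2, hβ3⟩ := hB0 β.1 β.2
  obtain ⟨ls, hlsk, huls⟩ : ∃ ls : Fin n, k ≤ (ls : ℕ) ∧ u (tau j) ls ≠ 0 := by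
    have hnz := LinearIndependent.ne_zero (tau j) (hol l0 hl0)
    have hex : ∃ γ : {γ : Fin n → ℕ // MemOalpha n m p k (alpha0 n p l0) γ},
        mon (u (tau j)) γ.1 ≠ 0 := by
      by_contra hno
      push_neg at hno
      exact hnz (funext fun γ => hno γ)
    obtain ⟨γ, hγ⟩ := hex
    obtain ⟨g1, g2, g3, g4⟩ := hmO l0 hl0 γ.1 γ.2
    have hssum : ∃ s, γ.1 s ≠ 0 := by
      by_contra hno
      push_neg at hno
      have h7 : ∑ s, γ.1 s = 0 := Finset.sum_eq_zero fun s _ => hno s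
      omega
    obtain ⟨s, hs⟩ := hssum
    refine ⟨s, (g3 s hs).1, ?_⟩
    have hfac := Finset.prod_ne_zero_iff.mp hγ s (Finset.mem_univ s)
    have hone : γ.1 s = 1 := by have := g1 s; omega
    rw [hone, pow_one] at hfac
    exact hfac
  have hufull : u' j = u (tau j) := by
    funext l
    by_cases hlk : k ≤ (l : ℕ)
    · exact hagree j l hlk
    push_neg at hlk
    obtain ⟨s0, hs0ne, hs0⟩ : ∃ s0, β.1 s0 ≠ 0 ∧ (β.1 l ≠ 0 → s0 = l) := by
      by_cases hb : β.1 l ≠ 0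
      · exact ⟨l, hb, fun _ => rfl⟩
      · have hex : ∃ s, β.1 s ≠ 0 := by
          by_contra hno
          push_neg at hno
          have h7 : ∑ s, β.1 s = 0 := Finset.sum_eq_zero fun s _ => hno s
          omega
        obtain ⟨s, hs⟩ := hex
        exact ⟨s, hs, fun h => absurd h hb⟩
    obtain ⟨δ0, hδ0⟩ : ∃ δ0 : Fin n → ℕ, δ0 = fun s => if s = s0 then 0 else β.1 s :=
      ⟨_, rfl⟩
    have hsplitβ : β.1 = fun s => δ0 s + esing s0 s := by
      funext s
      by_cases h : s = s0
      · subst h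
        have h8 := hβ1 s
        simp [hδ0, esing]
        omega
      · simp [hδ0, esing, h]
    have hδ0le : ∀ s, δ0 s ≤ 1 := by
      intro s
      by_cases h : s = s0
      · simp [hδ0, h]
      · simpa [hδ0, h] using hβ1 s
    have hδ0supp : ∀ s, δ0 s ≠ 0 → (s : ℕ) < k := by
      intro s hs
      refine hβ3 s ?_
      by_cases h : s = s0
      · subst h; simp [hδ0] at hs
      · simpa [hδ0, h] using hs
    have hδ0sum : ∑ s, δ0 s + 1 = p := by
      have h6 : ∑ s, β.1 s = ∑ s, (δ0 s + esing s0 s) := by rw [hsplitβ]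
      rw [hβ2, Finset.sum_add_distrib, esing_sum] at h6
      omega
    have hδ0l : δ0 l = 0 := by
      by_cases h : l = s0
      · simp [hδ0, h]
      · simp only [hδ0, if_neg h]
        by_contra hh
        exact h (hs0 hh).symm
    have hδ0ls : δ0 ls = 0 := by
      by_contra hh
      have := hδ0supp ls hh
      omega
    have hδ0ne : mon (u (tau j)) δ0 ≠ 0 := by
      have h5 : mon (u (tau j)) δ0 * u (tau j) s0 ≠ 0 := by
        rw [← mon_esing, ← hsplitβ]
        exact hβne
      exact left_ne_zero_of_mul h5
    have hlls : l ≠ ls := by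
      intro h
      rw [h] at hlk
      omega
    have eA := hW ls hlsk (fun s => δ0 s + esing ls s)
      (fun s => by
        by_cases h : s = ls
        · subst h; simp [esing, hδ0ls]
        · simpa [esing, h] using hδ0le s)
      (fun s hs => by
        by_cases h : s = ls
        · exact Or.inr h
        · simp only [esing, if_neg h, add_zero] at hs
          exact Or.inl (hδ0supp s hs))
      (Or.inl (by rw [Finset.sum_add_distrib, esing_sum]; omega))
      j
    have eB := hW ls hlsk (fun s => (δ0 s + esing l s) + esing ls s)
      (fun s => by
        by_cases h : s = ls
        · subst h
          have h9 : ¬ s = l := fun hh => hlls hh.symm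
          simp [esing, hδ0ls, h9]
        · by_cases h2 : s = l
          · subst h2
            simp [esing, h, hδ0l]
          · simpa [esing, h, h2] using hδ0le s)
      (fun s hs => by
        by_cases h : s = ls
        · exact Or.inr h
        · by_cases h2 : s = l
          · subst h2; exact Or.inl hlk
          · simp only [esing, if_neg h, if_neg h2, add_zero] at hs
            exact Or.inl (hδ0supp s hs))
      (Or.inr (by
        rw [Finset.sum_add_distrib, Finset.sum_add_distrib, esing_sum, esing_sum]
        omega))
      j
    simp only [mon_esing] at eA eB
    rw [hagree j ls hlsk] at eA eB
    have eA' : (lam' j * mon (u' j) δ0) * u (tau j) ls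
        = (lam (tau j) * mon (u (tau j)) δ0) * u (tau j) ls := by linear_combination eA
    have hAD := mul_right_cancel₀ huls eA'
    have eB' : ((lam' j * mon (u' j) δ0) * u' j l) * u (tau j) ls
        = ((lam (tau j) * mon (u (tau j)) δ0) * u (tau j) l) * u (tau j) ls := by
      linear_combination eB
    have eB'' := mul_right_cancel₀ huls eB'
    rw [hAD] at eB''
    exact mul_left_cancel₀ (mul_ne_zero (hlam (tau j)) hδ0ne) eB''
  have hlast := hW ls hlsk β.1 hβ1 (fun s hs => Or.inl (hβ3 s hs)) (Or.inl hβ2) j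
  rw [hufull] at hlast
  exact ⟨mul_right_cancel₀ hβne hlast, hufull⟩
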